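/- For every integer n ≥ 3, exp(H_n)·log(H_n) ≥ e^γ · n · log(log n). -/
import Mathlib

open Real

/-- For every `n ≥ 3`, `exp(H_n) * log(H_n) ≥ e^γ * n * log (log n)`. -/
theorem exp_harmonic_mul_log_harmonic_ge (n : ℕ) (hn : 3 ≤ n) :
    exp eulerMascheroniConstant * n * log (log n) ≤
      exp (harmonic n) * log (harmonic n) := by
  have hn0 : (n : ℝ) ≥ 3 := by exact_mod_cast hn
  have hγ : eulerMascheroniConstant < (harmonic n : ℝ) - log n := by
    have := Real.eulerMascheroniConstant_lt_eulerMascheroniSeq' n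
    rwa [Real.eulerMascheroniSeq', if_neg (by omega : n ≠ 0)] at this
  have hlogn : (1 : ℝ) < log n := by
    have : (Real.exp 1) < n := lt_of_lt_of_le (by
      have := Real.exp_one_lt_d9; linarith) hn0
    calc (1:ℝ) = log (exp 1) := by rw [Real.log_exp]
    _ < log n := Real.log_lt_log (Real.exp_pos 1) this
  have hγpos : (0:ℝ) < eulerMascheroniConstant :=
    lt_trans (by norm_num) Real.one_half_lt_eulerMascheroniConstant
  have hle1 : exp eulerMascheroniConstant * n ≤ exp (harmonic n) := by
    have : exp eulerMascheroniConstant * n = exp (eulerMascheroniConstant + log n) := by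
      rw [Real.exp_add, Real.exp_log (by linarith)]
    rw [this]
    exact Real.exp_le_exp.mpr (by linarith)
  have hlog_le : log n ≤ (harmonic n : ℝ) := by linarith
  have hle2 : log (log n) ≤ log (harmonic n) :=
    Real.log_le_log (by linarith) hlog_le
  have hb : (0:ℝ) ≤ log (log n) := Real.log_nonneg (le_of_lt hlogn)
  have ha : (0:ℝ) ≤ exp eulerMascheroniConstant * n := by positivity
  calc exp eulerMascheroniConstant * n * log (log n)
      ≤ exp (harmonic n) * log (harmonic n) :=
        mul_le_mul hle1 hle2 hb (Real.exp_nonneg _)
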